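/- If S is a Noetherian ordered set whose height hgt(S) is a limit ordinal, then the minimal order type of S (the least ordinal α such that the ordering of S extends to a well-ordering of order type α) equals hgt(S). -/

import Mathlib

universe u

open Ordinal in
private theorem aux_add_nat_lt_of_limit {H o : Ordinal.{u}} (hlim : Order.IsSuccLimit H)
    (h : o < H) (n : ℕ) : o + n < H := by
  induction n with
  | zero => simpa using h
  | succ n ih =>
    have : o + (n + 1 : ℕ) = Order.succ (o + n) := by
      push_cast
      rw [← add_assoc, Ordinal.add_one_eq_succ]
    rw [this]
    exact hlim.succ_lt ih

section aux

variable {S : Type u} [PartialOrder S] (hgt : S → Ordinal.{u})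

/-- The finite part of the height of `x` (so `hgt x = ω * (hgt x / ω) + nnAux x`). -/
private noncomputable def nnAux (x : S) : ℕ :=
  (Ordinal.lt_omega0.1 (Ordinal.mod_lt (hgt x) Ordinal.omega0_ne_zero)).choose

private theorem nnAux_spec (x : S) :
    Ordinal.omega0 * (hgt x / Ordinal.omega0) + (nnAux hgt x : Ordinal) = hgt x := by
  have := (Ordinal.lt_omega0.1 (Ordinal.mod_lt (hgt x) Ordinal.omega0_ne_zero)).choose_spec
  rw [nnAux, ← this, Ordinal.div_add_mod]

/-- Index of `x` within its (finite) level. -/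
private noncomputable def kkAux (x : S) : ℕ :=
  {z : S | hgt z = hgt x ∧ WellOrderingRel z x}.ncard

/-- Position of `x` within its "limit block". -/
private noncomputable def ccAux (x : S) : ℕ :=
  (∑ m ∈ Finset.range (nnAux hgt x),
    {y : S | hgt y = Ordinal.omega0 * (hgt x / Ordinal.omega0) + m}.ncard) + kkAux hgt x

private noncomputable def ffAux (x : S) : Ordinal.{u} :=
  Ordinal.omega0 * (hgt x / Ordinal.omega0) + (ccAux hgt x : Ordinal)

variable (hfin : ∀ β : Ordinal.{u}, {y : S | hgt y = β}.Finite)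

include hfin

private theorem kkAux_lt (x : S) : kkAux hgt x < {y : S | hgt y = hgt x}.ncard := by
  apply Set.ncard_lt_ncard _ (hfin _)
  constructor
  · exact fun z hz => hz.1
  · intro hsub
    exact _root_.irrefl x (hsub (Set.mem_setOf.2 rfl)).2

private theorem kkAux_lt_kkAux {x y : S} (h : hgt x = hgt y) (hxy : WellOrderingRel x y) :
    kkAux hgt x < kkAux hgt y := by
  apply Set.ncard_lt_ncard
  · constructor
    · exact fun z hz => ⟨hz.1.trans h, _root_.trans hz.2 hxy⟩
    · intro hsub
      exact _root_.irrefl x (hsub ⟨h, hxy⟩).2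
  · exact (hfin (hgt y)).subset fun z hz => hz.1

private theorem kkAux_inj {x y : S} (h : hgt x = hgt y) (hk : kkAux hgt x = kkAux hgt y) :
    x = y := by
  rcases trichotomous_of WellOrderingRel x y with hxy | rfl | hyx
  · exact absurd hk (kkAux_lt_kkAux hgt hfin h hxy).ne
  · rfl
  · exact absurd hk.symm (kkAux_lt_kkAux hgt hfin h.symm hyx).ne

private theorem ccAux_lt_ccAux {x y : S}
    (hL : hgt x / Ordinal.omega0 = hgt y / Ordinal.omega0)
    (hn : nnAux hgt x < nnAux hgt y) : ccAux hgt x < ccAux hgt y := by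
  have h1 : ccAux hgt x < ∑ m ∈ Finset.range (nnAux hgt x + 1),
      {z : S | hgt z = Ordinal.omega0 * (hgt x / Ordinal.omega0) + m}.ncard := by
    rw [Finset.sum_range_succ]
    have := kkAux_lt hgt hfin x
    rw [show {y : S | hgt y = hgt x} =
        {z : S | hgt z = Ordinal.omega0 * (hgt x / Ordinal.omega0) + (nnAux hgt x : Ordinal)}
      from by rw [nnAux_spec]] at this
    exact Nat.add_lt_add_left this _
  refine h1.trans_le (le_trans ?_ (Nat.le_add_right _ _))
  rw [hL]
  exact Finset.sum_le_sum_of_subset (Finset.range_subset_range.2 hn)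

private theorem ffAux_lt_of_div_lt {x y : S}
    (h : hgt x / Ordinal.omega0 < hgt y / Ordinal.omega0) : ffAux hgt x < ffAux hgt y := by
  have h1 : ffAux hgt x < Ordinal.omega0 * (hgt x / Ordinal.omega0) + Ordinal.omega0 :=
    add_lt_add_right (Ordinal.nat_lt_omega0 _) _
  have h2 : Ordinal.omega0 * (hgt x / Ordinal.omega0) + Ordinal.omega0
      ≤ Ordinal.omega0 * (hgt y / Ordinal.omega0) := by
    rw [← mul_add_one]
    exact mul_le_mul_right (Order.add_one_le_iff.2 h) _
  exact h1.trans_le (h2.trans le_self_add)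

private theorem ffAux_lt_ffAux {x y : S} (h : hgt x < hgt y) : ffAux hgt x < ffAux hgt y := by
  have hdiv : hgt x / Ordinal.omega0 ≤ hgt y / Ordinal.omega0 :=
    (Ordinal.le_div Ordinal.omega0_ne_zero).2 ((Ordinal.mul_div_le _ _).trans h.le)
  rcases hdiv.lt_or_eq with hlt | heq
  · exact ffAux_lt_of_div_lt hgt hfin hlt
  · have hn : nnAux hgt x < nnAux hgt y := by
      have := h
      rw [← nnAux_spec hgt x, ← nnAux_spec hgt y, heq, add_lt_add_iff_left] at this
      exact_mod_cast this
    exact add_lt_add_of_le_of_lt (by rw [heq])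
      (by exact_mod_cast ccAux_lt_ccAux hgt hfin heq hn)

private theorem ffAux_inj {x y : S} (h : ffAux hgt x = ffAux hgt y) : x = y := by
  rcases lt_trichotomy (hgt x / Ordinal.omega0) (hgt y / Ordinal.omega0) with hlt | heq | hgt'
  · exact absurd h (ffAux_lt_of_div_lt hgt hfin hlt).ne
  · have hc : ccAux hgt x = ccAux hgt y := by
      rw [ffAux, ffAux, heq, add_left_cancel_iff] at h
      exact_mod_cast h
    rcases lt_trichotomy (nnAux hgt x) (nnAux hgt y) with hn | hn | hn
    · exact absurd hc (ccAux_lt_ccAux hgt hfin heq hn).ne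
    · have hh : hgt x = hgt y := by
        rw [← nnAux_spec hgt x, ← nnAux_spec hgt y, heq, hn]
      have hk : kkAux hgt x = kkAux hgt y := by
        have : (∑ m ∈ Finset.range (nnAux hgt x),
            {z : S | hgt z = Ordinal.omega0 * (hgt x / Ordinal.omega0) + m}.ncard)
            = ∑ m ∈ Finset.range (nnAux hgt y),
            {z : S | hgt z = Ordinal.omega0 * (hgt y / Ordinal.omega0) + m}.ncard := by
          rw [heq, hn]
        rw [ccAux, ccAux, this, Nat.add_left_cancel_iff] at hc
        exact hc
      exact kkAux_inj hgt hfin hh hk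
    · exact absurd hc.symm (ccAux_lt_ccAux hgt hfin heq.symm hn).ne
  · exact absurd h.symm (ffAux_lt_of_div_lt hgt hfin hgt').ne

end aux

/-- If `S` is a Noetherian ordered set whose height is a limit ordinal, then the minimal
order type of `S` (the least order type of a well-ordering extending the ordering of `S`)
equals the height of `S`. -/
theorem stmt_16 {S : Type u} [PartialOrder S]
    (hNoeth : ∀ f : ℕ → S, ∃ i j : ℕ, i < j ∧ f i ≤ f j)
    (hgt : S → Ordinal.{u})
    (Hhgt : ∀ x : S, hgt x = sSup ((fun y => hgt y + 1) '' {y : S | y < x}))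
    (hlim : Order.IsSuccLimit (sSup (Set.range fun x : S => hgt x + 1))) :
    IsLeast {α : Ordinal.{u} | ∃ (r : S → S → Prop) (hwo : IsWellOrder S r),
        (∀ x y : S, x < y → r x y) ∧ @Ordinal.type S r hwo = α}
      (sSup (Set.range fun x : S => hgt x + 1)) := by
  set H := sSup (Set.range fun x : S => hgt x + 1) with hH
  -- heights are strictly monotone
  have hmono : ∀ x y : S, x < y → hgt x < hgt y := by
    intro x y hxy
    have h1 : hgt x + 1 ≤ hgt y := by
      rw [Hhgt y]
      exact le_csSup Ordinal.bddAbove_of_small ⟨x, hxy, rfl⟩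
    exact lt_of_lt_of_le (Order.add_one_le_iff.1 le_rfl) h1
  -- each level is finite (it is an antichain)
  have hfin : ∀ β : Ordinal.{u}, {y : S | hgt y = β}.Finite := by
    intro β
    by_contra hinf
    have hinf' : {y : S | hgt y = β}.Infinite := hinf
    set e := hinf'.natEmbedding with he
    obtain ⟨i, j, hij, hle⟩ := hNoeth fun n => (e n : S)
    rcases eq_or_lt_of_le hle with heq | hlt
    · exact hij.ne (e.injective (Subtype.ext heq))
    · have := hmono _ _ hlt
      rw [(e i).2, (e j).2] at this
      exact this.false
  -- every element's height is below H
  have hltH : ∀ x : S, hgt x < H := fun x =>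
    lt_of_lt_of_le (Order.add_one_le_iff.1 le_rfl)
      (le_csSup Ordinal.bddAbove_of_small ⟨x, rfl⟩)
  -- lower bound: every linearization has type at least H
  have lb : ∀ (r : S → S → Prop) (hwo : IsWellOrder S r),
      (∀ x y : S, x < y → r x y) → H ≤ @Ordinal.type S r hwo := by
    intro r hwo hext
    have key : ∀ x : S, hgt x ≤ Ordinal.typein r x := by
      intro x
      refine hwo.wf.induction (C := fun z => hgt z ≤ Ordinal.typein r z) x ?_
      intro z IH
      rw [Hhgt z]
      apply csSup_le'
      rintro _ ⟨y, hyz, rfl⟩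
      have hr : r y z := hext _ _ hyz
      have h1 : Ordinal.typein r y < Ordinal.typein r z := (Ordinal.typein_lt_typein r).2 hr
      calc hgt y + 1 ≤ Ordinal.typein r y + 1 := add_le_add_left (IH y hr) 1
        _ ≤ Ordinal.typein r z := Order.add_one_le_iff.2 h1
    apply csSup_le'
    rintro _ ⟨x, rfl⟩
    calc hgt x + 1 ≤ Ordinal.typein r x + 1 := add_le_add_left (key x) 1
      _ ≤ Ordinal.type r := Order.add_one_le_iff.2 (Ordinal.typein_lt_type r x)
  -- the linearization
  set f : S → Ordinal.{u} := ffAux hgt with hf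
  have finj : Function.Injective f := fun x y h => ffAux_inj hgt hfin h
  have fmono : ∀ x y : S, x < y → f x < f y := fun x y h => ffAux_lt_ffAux hgt hfin (hmono _ _ h)
  have fltH : ∀ x : S, f x < H := by
    intro x
    have h1 : Ordinal.omega0 * (hgt x / Ordinal.omega0) ≤ hgt x := Ordinal.mul_div_le _ _
    exact aux_add_nat_lt_of_limit hlim (lt_of_le_of_lt h1 (hltH x)) _
  set r : S → S → Prop := fun x y => f x < f y with hr
  have hwo : IsWellOrder S r := by
    letI e : r ↪r ((· < ·) : Ordinal.{u} → Ordinal.{u} → Prop) := ⟨⟨f, finj⟩, Iff.rfl⟩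
    exact e.isWellOrder
  have hext : ∀ x y : S, x < y → r x y := fun x y h => fmono x y h
  have hle : @Ordinal.type S r hwo ≤ H := by
    letI g : S → H.ToType := fun x => Ordinal.ToType.mk (o := H) ⟨f x, fltH x⟩
    have hgiff : ∀ x y : S, r x y ↔ g x < g y := by
      intro x y
      rw [hr]
      constructor
      · intro h
        exact (Ordinal.ToType.mk (o := H)).lt_iff_lt.2 (Subtype.mk_lt_mk.2 h)
      · intro h
        exact Subtype.mk_lt_mk.1 ((Ordinal.ToType.mk (o := H)).lt_iff_lt.1 h)
    have ginj : Function.Injective g := by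
      intro x y h
      apply finj
      have := (Ordinal.ToType.mk (o := H)).injective h
      exact Subtype.mk_eq_mk.1 this
    letI iwo : IsWellOrder H.ToType ((· < ·) : H.ToType → H.ToType → Prop) := isWellOrder_lt
    letI emb : r ↪r ((· < ·) : H.ToType → H.ToType → Prop) :=
      ⟨⟨g, ginj⟩, by intro a b; exact (hgiff a b).symm⟩
    have h2 : Ordinal.type ((· < ·) : H.ToType → H.ToType → Prop) = H := Ordinal.type_toType H
    have h1 : @Ordinal.type S r hwo ≤ Ordinal.type ((· < ·) : H.ToType → H.ToType → Prop) :=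
      Ordinal.type_le_iff'.2 ⟨emb⟩
    exact h1.trans_eq h2
  constructor
  · exact ⟨r, hwo, hext, le_antisymm hle (lb r hwo hext)⟩
  · rintro α ⟨r', hwo', hext', htype⟩
    exact htype ▸ lb r' hwo' hext'
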